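/- Let m ≥ 1 be an integer. Let J be the 2m×2m complex matrix with entries J_{ij} = (−1)^i if i + j = 2m − 1 and J_{ij} = 0 otherwise (indices 0 ≤ i, j ≤ 2m−1), let sp(J) = { X ∈ M_{2m}(ℂ) : Xᵗ·J + J·X = 0 }, and let E be the diagonal matrix with entries E_{ii} = (−1)^i. Then dim { X ∈ sp(J) : E·X = X·E } = m². -/

import Mathlib

namespace Stmt14Aux

/-- Halve an index of `Fin (2*m)`. -/
def half {m : ℕ} (i : Fin (2 * m)) : Fin m := ⟨i.val / 2, by have := i.isLt; omega⟩

/-- Double an index of `Fin m`. -/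
def dbl {m : ℕ} (a : Fin m) : Fin (2 * m) := ⟨2 * a.val, by have := a.isLt; omega⟩

lemma half_dbl {m : ℕ} (a : Fin m) : half (dbl a) = a := by
  apply Fin.ext; simp only [half, dbl]; omega

lemma neg_one_pow_complex (a : ℕ) : (-1 : ℂ) ^ a = if a % 2 = 0 then 1 else -1 := by
  rcases Nat.even_or_odd a with h | h
  · simp [h.neg_one_pow, Nat.even_iff.mp h]
  · simp [h.neg_one_pow, Nat.odd_iff.mp h]

/-- The parametrizing linear map. -/
def psi (m : ℕ) : (Fin m × Fin m → ℂ) →ₗ[ℂ] Matrix (Fin (2 * m)) (Fin (2 * m)) ℂ where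
  toFun g := Matrix.of fun i j =>
    if i.val % 2 = 0 ∧ j.val % 2 = 0 then g (half i, half j)
    else if i.val % 2 = 1 ∧ j.val % 2 = 1 then -g (half j.rev, half i.rev)
    else 0
  map_add' g h := by
    ext i j
    simp only [Matrix.add_apply, Pi.add_apply, Matrix.of_apply]
    split_ifs <;> simp [neg_add] <;> ring
  map_smul' c g := by
    ext i j
    simp only [Matrix.smul_apply, Pi.smul_apply, RingHom.id_apply, smul_eq_mul, Matrix.of_apply]
    split_ifs <;> simp [mul_neg] <;> ring

end Stmt14Aux

open Stmt14Aux Matrix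

/-- Let `m ≥ 1`, `J` the `2m × 2m` matrix with `J i j = (-1)^i` if
`i + j = 2m - 1` and `0` otherwise, `sp(J) = {X : Xᵀ J + J X = 0}`, and `E` the diagonal
matrix with entries `(-1)^i`. Then `dim {X ∈ sp(J) : E X = X E} = m²`. -/
theorem stmt_14
    (m : ℕ) (hm : 1 ≤ m)
    (J : Matrix (Fin (2 * m)) (Fin (2 * m)) ℂ)
    (hJ : J = fun i j : Fin (2 * m) =>
      if (i : ℕ) + (j : ℕ) = 2 * m - 1 then (-1 : ℂ) ^ (i : ℕ) else 0)
    (E : Matrix (Fin (2 * m)) (Fin (2 * m)) ℂ)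
    (hE : E = Matrix.diagonal fun i : Fin (2 * m) => (-1 : ℂ) ^ (i : ℕ)) :
    Module.finrank ℂ
        ↥(LinearMap.ker
            (LinearMap.mulRight ℂ J ∘ₗ
              (Matrix.transposeLinearEquiv (Fin (2 * m)) (Fin (2 * m)) ℂ ℂ).toLinearMap
              + LinearMap.mulLeft ℂ J)
          ⊓ LinearMap.ker (LinearMap.mulLeft ℂ E - LinearMap.mulRight ℂ E))
      = m ^ 2 := by
  subst hJ hE
  set n := 2 * m with hn
  set Jm : Matrix (Fin n) (Fin n) ℂ := fun i j : Fin n =>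
      if (i : ℕ) + (j : ℕ) = 2 * m - 1 then (-1 : ℂ) ^ (i : ℕ) else 0 with hJm
  set Em : Matrix (Fin n) (Fin n) ℂ :=
      Matrix.diagonal fun i : Fin n => (-1 : ℂ) ^ (i : ℕ) with hEm
  set S : Submodule ℂ (Matrix (Fin n) (Fin n) ℂ) :=
    LinearMap.ker
            (LinearMap.mulRight ℂ Jm ∘ₗ
              (Matrix.transposeLinearEquiv (Fin n) (Fin n) ℂ ℂ).toLinearMap
              + LinearMap.mulLeft ℂ Jm)
          ⊓ LinearMap.ker (LinearMap.mulLeft ℂ Em - LinearMap.mulRight ℂ Em) with hS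
  -- entrywise form of the two matrix products with `Jm`
  have hJapp : ∀ i k : Fin n, Jm i k =
      if (i : ℕ) + (k : ℕ) = 2 * m - 1 then (-1 : ℂ) ^ (i : ℕ) else 0 := fun _ _ => rfl
  have hmulJ : ∀ (X : Matrix (Fin n) (Fin n) ℂ) (i j : Fin n),
      (Jm * X) i j = (-1 : ℂ) ^ (i : ℕ) * X i.rev j := by
    intro X i j
    rw [Matrix.mul_apply, Finset.sum_eq_single i.rev]
    · rw [hJapp, if_pos (by have := i.isLt; rw [Fin.val_rev]; omega)]
    · intro b _ hb
      rw [hJapp, if_neg, zero_mul]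
      intro hc
      apply hb
      apply Fin.ext
      have := i.isLt; have := b.isLt
      rw [Fin.val_rev]; omega
    · intro h; exact absurd (Finset.mem_univ _) h
  have hmulJ' : ∀ (X : Matrix (Fin n) (Fin n) ℂ) (i j : Fin n),
      (Xᵀ * Jm) i j = (-1 : ℂ) ^ (j.rev : ℕ) * X j.rev i := by
    intro X i j
    rw [Matrix.mul_apply, Finset.sum_eq_single j.rev]
    · rw [hJapp, if_pos (by have := j.isLt; rw [Fin.val_rev]; omega),
        Matrix.transpose_apply, mul_comm]
    · intro b _ hb
      rw [hJapp, if_neg, mul_zero]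
      intro hc
      apply hb
      apply Fin.ext
      have := j.isLt; have := b.isLt
      rw [Fin.val_rev]; omega
    · intro h; exact absurd (Finset.mem_univ _) h
  have hrevpar : ∀ i : Fin n, (i.rev : ℕ) % 2 = ((i : ℕ) + 1) % 2 := by
    intro i; have := i.isLt; rw [Fin.val_rev]; omega
  -- membership criterion
  have memS : ∀ X : Matrix (Fin n) (Fin n) ℂ, X ∈ S ↔
      ((∀ i j : Fin n, ((i : ℕ) + (j : ℕ)) % 2 = 1 → X i j = 0) ∧
       (∀ i j : Fin n, X i j = -X j.rev i.rev)) := by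
    intro X
    have hSmem : X ∈ S ↔ (Xᵀ * Jm + Jm * X = 0 ∧ Em * X - X * Em = 0) := by
      rw [hS, Submodule.mem_inf, LinearMap.mem_ker, LinearMap.mem_ker]
      simp [LinearMap.mulLeft_apply, LinearMap.mulRight_apply,
        Matrix.transposeLinearEquiv_apply, Matrix.transposeAddEquiv]
    rw [hSmem]
    constructor
    · rintro ⟨h1, h2⟩
      have h1' : ∀ i j : Fin n,
          (-1 : ℂ) ^ (j.rev : ℕ) * X j.rev i + (-1 : ℂ) ^ (i : ℕ) * X i.rev j = 0 := by
        intro i j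
        have := congrFun (congrFun h1 i) j
        rwa [Matrix.add_apply, hmulJ, hmulJ', Matrix.zero_apply] at this
      have h2' : ∀ i j : Fin n, ((i : ℕ) + (j : ℕ)) % 2 = 1 → X i j = 0 := by
        intro i j hij
        have := congrFun (congrFun h2 i) j
        rw [Matrix.sub_apply, Matrix.zero_apply, Matrix.diagonal_mul,
          Matrix.mul_diagonal, sub_eq_zero] at this
        rw [neg_one_pow_complex, neg_one_pow_complex] at this
        by_cases hi' : (i : ℕ) % 2 = 0
        · have hj' : ¬ ((j : ℕ) % 2 = 0) := by omega
          rw [if_pos hi', if_neg hj'] at this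
          have : (2 : ℂ) * X i j = 0 := by linear_combination this
          simpa using this
        · have hj' : (j : ℕ) % 2 = 0 := by omega
          rw [if_neg hi', if_pos hj'] at this
          have : (2 : ℂ) * X i j = 0 := by linear_combination -this
          simpa using this
      refine ⟨h2', ?_⟩
      intro p q
      by_cases hpq : ((p : ℕ) + (q : ℕ)) % 2 = 1
      · -- opposite parity: both sides vanish
        rw [h2' p q hpq, h2' q.rev p.rev (by
          simp only [Fin.val_rev]
          have := p.isLt; have := q.isLt; omega), neg_zero]
      · -- equal parity: use the symplectic relation at (p.rev, q)
        have hkey := h1' p.rev q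
        rw [Fin.rev_rev] at hkey
        have hpar : ((q.rev : ℕ)) % 2 = ((p.rev : ℕ)) % 2 := by
          simp only [Fin.val_rev]
          have := p.isLt; have := q.isLt; omega
        have hsign : (-1 : ℂ) ^ (q.rev : ℕ) = (-1 : ℂ) ^ ((p.rev : ℕ)) := by
          rw [neg_one_pow_complex, neg_one_pow_complex, hpar]
        rw [hsign] at hkey
        have hne : ((-1 : ℂ) ^ ((p.rev : ℕ))) ≠ 0 := by
          rw [neg_one_pow_complex]; split_ifs <;> norm_num
        have hsum : X q.rev p.rev + X p q = 0 := by
          rcases mul_eq_zero.mp (show (-1 : ℂ) ^ ((p.rev : ℕ)) *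
              (X q.rev p.rev + X p q) = 0 by linear_combination hkey) with h | h
          · exact absurd h hne
          · exact h
        linear_combination hsum
    · rintro ⟨h1, h2⟩
      constructor
      · funext i j
        rw [Matrix.add_apply, hmulJ, hmulJ', Matrix.zero_apply]
        by_cases hij : ((i : ℕ) + (j : ℕ)) % 2 = 1
        · -- i+j odd
          rw [h2 j.rev i, Fin.rev_rev]
          have hpar : ((j.rev : ℕ)) % 2 = ((i : ℕ)) % 2 := by
            simp only [Fin.val_rev]
            have := i.isLt; have := j.isLt; omega
          have hsign : (-1 : ℂ) ^ (j.rev : ℕ) = (-1 : ℂ) ^ ((i : ℕ)) := by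
            rw [neg_one_pow_complex, neg_one_pow_complex, hpar]
          rw [hsign]; ring
        · have hz1 : X j.rev i = 0 := h1 _ _ (by
            simp only [Fin.val_rev]
            have := i.isLt; have := j.isLt; omega)
          have hz2 : X i.rev j = 0 := h1 _ _ (by
            simp only [Fin.val_rev]
            have := i.isLt; have := j.isLt; omega)
          rw [hz1, hz2]; ring
      · funext i j
        rw [Matrix.sub_apply, Matrix.zero_apply, Matrix.diagonal_mul, Matrix.mul_diagonal]
        by_cases hij : ((i : ℕ) + (j : ℕ)) % 2 = 1
        · rw [h1 i j hij]; ring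
        · have : (-1 : ℂ) ^ ((i : ℕ)) = (-1 : ℂ) ^ ((j : ℕ)) := by
            rw [neg_one_pow_complex, neg_one_pow_complex]
            have : ((i : ℕ)) % 2 = ((j : ℕ)) % 2 := by omega
            rw [this]
          rw [this]; ring
  -- ψ lands in S
  have hpsi_apply : ∀ (g : Fin m × Fin m → ℂ) (i j : Fin n),
      psi m g i j =
        if i.val % 2 = 0 ∧ j.val % 2 = 0 then g (half i, half j)
        else if i.val % 2 = 1 ∧ j.val % 2 = 1 then -g (half j.rev, half i.rev)
        else 0 := by
    intro g i j; rfl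
  have hmem : ∀ g : Fin m × Fin m → ℂ, psi m g ∈ S := by
    intro g
    rw [memS]
    constructor
    · intro i j hij
      rw [hpsi_apply, if_neg (by omega), if_neg (by omega)]
    · intro p q
      have hp2 := p.isLt
      have hq2 := q.isLt
      have hpr : ((p.rev : ℕ)) = n - (p + 1) := Fin.val_rev p
      have hqr : ((q.rev : ℕ)) = n - (q + 1) := Fin.val_rev q
      by_cases hp : (p : ℕ) % 2 = 0 <;> by_cases hq : (q : ℕ) % 2 = 0
      · rw [hpsi_apply, hpsi_apply, if_pos ⟨hp, hq⟩, if_neg (by omega),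
          if_pos ⟨by omega, by omega⟩, Fin.rev_rev, Fin.rev_rev, neg_neg]
      · rw [hpsi_apply, hpsi_apply, if_neg (by omega), if_neg (by omega),
          if_neg (by omega), if_neg (by omega), neg_zero]
      · rw [hpsi_apply, hpsi_apply, if_neg (by omega), if_neg (by omega),
          if_neg (by omega), if_neg (by omega), neg_zero]
      · rw [hpsi_apply, hpsi_apply, if_neg (by omega), if_pos ⟨by omega, by omega⟩,
          if_pos ⟨by omega, by omega⟩]
  -- the restricted map is bijective
  set F : (Fin m × Fin m → ℂ) →ₗ[ℂ] S := (psi m).codRestrict S hmem with hF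
  have hFinj : Function.Injective F := by
    intro g h hgh
    funext ab
    obtain ⟨a, b⟩ := ab
    have := congrArg (fun Y : S => (Y : Matrix (Fin n) (Fin n) ℂ) (dbl a) (dbl b)) hgh
    simp only [hF, LinearMap.codRestrict_apply] at this
    rw [hpsi_apply, hpsi_apply] at this
    have hda : (dbl a : Fin n).val % 2 = 0 := by simp only [dbl]; omega
    have hdb : (dbl b : Fin n).val % 2 = 0 := by simp only [dbl]; omega
    rw [if_pos ⟨hda, hdb⟩, if_pos ⟨hda, hdb⟩, half_dbl, half_dbl] at this
    exact this
  have hFsurj : Function.Surjective F := by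
    rintro ⟨X, hX⟩
    rw [memS] at hX
    obtain ⟨h1, h2⟩ := hX
    refine ⟨fun ab => X (dbl ab.1) (dbl ab.2), ?_⟩
    apply Subtype.ext
    simp only [hF, LinearMap.codRestrict_apply]
    funext i j
    rw [hpsi_apply]
    have hi2 := i.isLt
    have hj2 := j.isLt
    by_cases hi : (i : ℕ) % 2 = 0 <;> by_cases hj : (j : ℕ) % 2 = 0
    · rw [if_pos ⟨hi, hj⟩]
      have hdi : dbl (half i) = i := by
        apply Fin.ext; simp only [dbl, half]; omega
      have hdj : dbl (half j) = j := by
        apply Fin.ext; simp only [dbl, half]; omega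
      simp only [hdi, hdj]
    · rw [if_neg (by omega), if_neg (by omega)]
      exact (h1 i j (by omega)).symm
    · rw [if_neg (by omega), if_neg (by omega)]
      exact (h1 i j (by omega)).symm
    · rw [if_neg (by omega), if_pos ⟨by omega, by omega⟩]
      have hdi : dbl (half i.rev) = i.rev := by
        apply Fin.ext
        simp only [dbl, half, Fin.val_rev]
        omega
      have hdj : dbl (half j.rev) = j.rev := by
        apply Fin.ext
        simp only [dbl, half, Fin.val_rev]
        omega
      simp only [hdi, hdj]
      rw [h2 i j]
  have e : (Fin m × Fin m → ℂ) ≃ₗ[ℂ] S := LinearEquiv.ofBijective F ⟨hFinj, hFsurj⟩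
  rw [← e.finrank_eq, Module.finrank_fintype_fun_eq_card]
  simp [sq]
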